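/- Let m ≥ 2 be an integer and α > 0 a real number. With θ = 4p^2·(p^2−4r)^2 − 4(p^2−4r)^3 − 36p·(p^2−4r)·q^2 + 32p^3·q^2 − 27q^4, one has the identity (m+α)^{12}·θ = 16·α·(m−1)·𝐩_m(α). -/
import Mathlib


/-- The coefficient `p` of the depressed quartic. -/
noncomputable def pCoeff (m : ℕ) (α : ℝ) : ℝ :=
  -(1 / (8 * ((m : ℝ) + α) ^ 2)) *
    (3 * (m : ℝ) ^ 2 - 10 * (m : ℝ) + 11 + 3 * α ^ 2 + 2 * (19 * (m : ℝ) - 21) * α)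

/-- The coefficient `q` of the depressed quartic. -/
noncomputable def qCoeff (m : ℕ) (α : ℝ) : ℝ :=
  -(1 / (8 * ((m : ℝ) + α) ^ 3)) *
    (α ^ 3 + α ^ 2 * (11 - 13 * (m : ℝ)) - α * ((m : ℝ) - 1) * (13 * (m : ℝ) + 23)
      + ((m : ℝ) - 3) * ((m : ℝ) - 1) ^ 2)

/-- The coefficient `r` of the depressed quartic. -/
noncomputable def rCoeff (m : ℕ) (α : ℝ) : ℝ :=
  -(1 / (256 * ((m : ℝ) + α) ^ 4)) *
    (3 * α ^ 4 + 172 * α ^ 3 - 1630 * α ^ 2 + 204 * α + 3 * (m : ℝ) ^ 4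
      - 180 * α * (m : ℝ) ^ 3 - 20 * (m : ℝ) ^ 3 - 366 * α ^ 2 * (m : ℝ) ^ 2
      + 1796 * α * (m : ℝ) ^ 2 + 34 * (m : ℝ) ^ 2 - 180 * α ^ 3 * (m : ℝ)
      + 1988 * α ^ 2 * (m : ℝ) - 1788 * α * (m : ℝ) + 12 * (m : ℝ) - 45)

/-- The degree-8 polynomial `𝐩_m(α)` whose unique positive root is `α_m`. -/
noncomputable def pm (m : ℕ) (α : ℝ) : ℝ :=
  16 * ((m : ℝ) - 1) ^ 2 * α ^ 8
    - 4 * ((m : ℝ) - 1) * (8 * (m : ℝ) ^ 2 + 3) * α ^ 7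
    - (16 * (m : ℝ) ^ 4 - 256 * (m : ℝ) ^ 3 + 584 * (m : ℝ) ^ 2 - 496 * (m : ℝ) + 153) * α ^ 6
    + 2 * (32 * (m : ℝ) ^ 5 - 224 * (m : ℝ) ^ 4 + 1238 * (m : ℝ) ^ 3 - 2738 * (m : ℝ) ^ 2
        + 2545 * (m : ℝ) - 852) * α ^ 5
    - ((m : ℝ) - 1) * (16 * (m : ℝ) ^ 5 + 48 * (m : ℝ) ^ 4 - 1712 * (m : ℝ) ^ 3
        + 6672 * (m : ℝ) ^ 2 - 4321 * (m : ℝ) - 641) * α ^ 4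
    - 2 * (16 * (m : ℝ) ^ 7 - 208 * (m : ℝ) ^ 6 + 250 * (m : ℝ) ^ 5 + 2302 * (m : ℝ) ^ 4
        - 3214 * (m : ℝ) ^ 3 - 588 * (m : ℝ) ^ 2 + 1566 * (m : ℝ) - 123) * α ^ 3
    + (16 * (m : ℝ) ^ 8 - 192 * (m : ℝ) ^ 7 + 984 * (m : ℝ) ^ 6 - 2864 * (m : ℝ) ^ 5
        + 1001 * (m : ℝ) ^ 4 + 4184 * (m : ℝ) ^ 3 - 3870 * (m : ℝ) ^ 2 + 794 * (m : ℝ) - 52) * α ^ 2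
    - 2 * ((m : ℝ) - 1) * (22 * (m : ℝ) ^ 6 - 148 * (m : ℝ) ^ 5 + 363 * (m : ℝ) ^ 4
        - 381 * (m : ℝ) ^ 3 + 185 * (m : ℝ) ^ 2 - 60 * (m : ℝ) + 2) * α
    - ((m : ℝ) - 2) ^ 3 * ((m : ℝ) - 1) ^ 2 * (m : ℝ)

lemma theta_aux (s P Q R : ℝ) (hs : s ≠ 0) :
    s ^ 12 * (4 * (-(1/(8*s^2))*P) ^ 2 * ((-(1/(8*s^2))*P) ^ 2 - 4 * (-(1/(256*s^4))*R)) ^ 2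
      - 4 * ((-(1/(8*s^2))*P) ^ 2 - 4 * (-(1/(256*s^4))*R)) ^ 3
      - 36 * (-(1/(8*s^2))*P) * ((-(1/(8*s^2))*P) ^ 2 - 4 * (-(1/(256*s^4))*R)) * (-(1/(8*s^3))*Q) ^ 2
      + 32 * (-(1/(8*s^2))*P) ^ 3 * (-(1/(8*s^3))*Q) ^ 2 - 27 * (-(1/(8*s^3))*Q) ^ 4)
    = (4 * P^2 * (P^2+R)^2 - 4 * (P^2+R)^3 + 288 * P * (P^2+R) * Q^2
        - 256 * P^3 * Q^2 - 1728 * Q^4) / 262144 := by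
  field_simp
  ring

set_option maxHeartbeats 1000000 in
/-- With `θ = 4p²(p²−4r)² − 4(p²−4r)³ − 36p(p²−4r)q² + 32p³q² − 27q⁴`, one has
`(m+α)¹² θ = 16 α (m−1) 𝐩_m(α)`. -/
theorem theta_identity (m : ℕ) (hm : 2 ≤ m) (α : ℝ) (hα : 0 < α) :
    let p := pCoeff m α
    let q := qCoeff m α
    let r := rCoeff m α
    let θ := 4 * p ^ 2 * (p ^ 2 - 4 * r) ^ 2 - 4 * (p ^ 2 - 4 * r) ^ 3
      - 36 * p * (p ^ 2 - 4 * r) * q ^ 2 + 32 * p ^ 3 * q ^ 2 - 27 * q ^ 4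
    ((m : ℝ) + α) ^ 12 * θ = 16 * α * ((m : ℝ) - 1) * pm m α := by
  intro p q r θ
  have hma : (m : ℝ) + α ≠ 0 := by positivity
  have key := theta_aux ((m : ℝ) + α)
    (3 * (m : ℝ) ^ 2 - 10 * (m : ℝ) + 11 + 3 * α ^ 2 + 2 * (19 * (m : ℝ) - 21) * α)
    (α ^ 3 + α ^ 2 * (11 - 13 * (m : ℝ)) - α * ((m : ℝ) - 1) * (13 * (m : ℝ) + 23)
      + ((m : ℝ) - 3) * ((m : ℝ) - 1) ^ 2)
    (3 * α ^ 4 + 172 * α ^ 3 - 1630 * α ^ 2 + 204 * α + 3 * (m : ℝ) ^ 4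
      - 180 * α * (m : ℝ) ^ 3 - 20 * (m : ℝ) ^ 3 - 366 * α ^ 2 * (m : ℝ) ^ 2
      + 1796 * α * (m : ℝ) ^ 2 + 34 * (m : ℝ) ^ 2 - 180 * α ^ 3 * (m : ℝ)
      + 1988 * α ^ 2 * (m : ℝ) - 1788 * α * (m : ℝ) + 12 * (m : ℝ) - 45) hma
  show ((m : ℝ) + α) ^ 12 * (4 * p ^ 2 * (p ^ 2 - 4 * r) ^ 2 - 4 * (p ^ 2 - 4 * r) ^ 3
      - 36 * p * (p ^ 2 - 4 * r) * q ^ 2 + 32 * p ^ 3 * q ^ 2 - 27 * q ^ 4) = _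
  have hp : p = -(1/(8*((m:ℝ)+α)^2)) * (3 * (m : ℝ) ^ 2 - 10 * (m : ℝ) + 11 + 3 * α ^ 2
      + 2 * (19 * (m : ℝ) - 21) * α) := by simp [p, pCoeff]
  have hq : q = -(1/(8*((m:ℝ)+α)^3)) * (α ^ 3 + α ^ 2 * (11 - 13 * (m : ℝ))
      - α * ((m : ℝ) - 1) * (13 * (m : ℝ) + 23) + ((m : ℝ) - 3) * ((m : ℝ) - 1) ^ 2) := by
    simp [q, qCoeff]
  have hr : r = -(1/(256*((m:ℝ)+α)^4)) * (3 * α ^ 4 + 172 * α ^ 3 - 1630 * α ^ 2 + 204 * α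
      + 3 * (m : ℝ) ^ 4 - 180 * α * (m : ℝ) ^ 3 - 20 * (m : ℝ) ^ 3 - 366 * α ^ 2 * (m : ℝ) ^ 2
      + 1796 * α * (m : ℝ) ^ 2 + 34 * (m : ℝ) ^ 2 - 180 * α ^ 3 * (m : ℝ)
      + 1988 * α ^ 2 * (m : ℝ) - 1788 * α * (m : ℝ) + 12 * (m : ℝ) - 45) := by
    simp [r, rCoeff]
  rw [hp, hq, hr, key, div_eq_iff (by norm_num : (262144:ℝ) ≠ 0)]
  unfold pm
  ring
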